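/- Let p ∈ (0, 1/2] and let K be a p-core CRG all of whose vertices are black and which contains no three vertices pairwise joined by gray edges. Then g_K(p) ≥ p/2. -/
import Mathlib


/-- Colors for edges of a colored regularity graph. -/
inductive EColor : Type
  | white
  | gray
  | black
deriving DecidableEq

/-- A colored regularity graph (CRG) on a finite vertex type `V`: each vertex is
white or black (`vWhite v = true` means white), and each pair of distinct vertices
gets a symmetric edge color (white, gray or black). -/
structure CRG (V : Type) [Fintype V] where
  vWhite : V → Bool
  ecolor : V → V → EColor
  ecolor_symm : ∀ u v, ecolor u v = ecolor v u

namespace CRG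

variable {V : Type} [Fintype V] [DecidableEq V]

/-- The matrix `M_K(p)`. -/
noncomputable def M (K : CRG V) (p : ℝ) (u v : V) : ℝ :=
  if u = v then (if K.vWhite u then p else 1 - p)
  else
    match K.ecolor u v with
    | EColor.white => p
    | EColor.black => 1 - p
    | EColor.gray => 0

/-- The function `g_K(p)`: the minimum of `xᵀ M_K(p) x` over nonnegative weight
vectors summing to `1`. -/
noncomputable def g (K : CRG V) (p : ℝ) : ℝ :=
  sInf {r : ℝ | ∃ x : V → ℝ, (∀ v, 0 ≤ x v) ∧ (∑ v, x v) = 1 ∧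
    r = ∑ u, ∑ v, x u * K.M p u v * x v}

/-- The sub-CRG induced on a subset `s` of the vertices. -/
def sub (K : CRG V) (s : Finset V) : CRG {v // v ∈ s} where
  vWhite := fun v => K.vWhite v.1
  ecolor := fun u v => K.ecolor u.1 v.1
  ecolor_symm := fun u v => K.ecolor_symm u.1 v.1

/-- `K` is `p`-core if `g_K(p) < g_{K'}(p)` for every proper (nonempty) sub-CRG `K'`. -/
def IsPCore (K : CRG V) (p : ℝ) : Prop :=
  ∀ s : Finset V, s.Nonempty → s ≠ Finset.univ → K.g p < (K.sub s).g p

/-- `x` is an optimal weight vector for `K` at `p`. -/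
def IsOptWeight (K : CRG V) (p : ℝ) (x : V → ℝ) : Prop :=
  (∀ v, 0 ≤ x v) ∧ (∑ v, x v) = 1 ∧
    (∑ u, ∑ v, x u * K.M p u v * x v) = K.g p

/-- The gray degree `d_G(v)`: total weight of gray neighbors of `v`. -/
noncomputable def dG (K : CRG V) (x : V → ℝ) (v : V) : ℝ :=
  ∑ w ∈ Finset.univ.filter fun w => w ≠ v ∧ K.ecolor v w = EColor.gray, x w

/-- The white degree `d_W(v)`: total weight of white neighbors of `v`, including `v`
itself if `v` is white. -/
noncomputable def dW (K : CRG V) (x : V → ℝ) (v : V) : ℝ :=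
  (∑ w ∈ Finset.univ.filter fun w => w ≠ v ∧ K.ecolor v w = EColor.white, x w) +
    (if K.vWhite v then x v else 0)

/-- The black degree `d_B(v)`: total weight of black neighbors of `v`, including `v`
itself if `v` is black. -/
noncomputable def dB (K : CRG V) (x : V → ℝ) (v : V) : ℝ :=
  (∑ w ∈ Finset.univ.filter fun w => w ≠ v ∧ K.ecolor v w = EColor.black, x w) +
    (if K.vWhite v then 0 else x v)

/-- The number of gray neighbors of `v`. -/
def grayDeg (K : CRG V) (v : V) : ℕ :=
  (Finset.univ.filter fun w => w ≠ v ∧ K.ecolor v w = EColor.gray).card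

end CRG

/-- A graph `H` embeds in a CRG `K`, written `H ↦ K`. -/
def EmbedsIn {α : Type*} {V : Type} [Fintype V] (H : SimpleGraph α) (K : CRG V) : Prop :=
  ∃ φ : α → V,
    (∀ a b : α, H.Adj a b →
      (φ a = φ b ∧ K.vWhite (φ a) = false) ∨
      (φ a ≠ φ b ∧ (K.ecolor (φ a) (φ b) = EColor.black ∨ K.ecolor (φ a) (φ b) = EColor.gray))) ∧
    (∀ a b : α, a ≠ b → ¬H.Adj a b →
      (φ a = φ b ∧ K.vWhite (φ a) = true) ∨
      (φ a ≠ φ b ∧ (K.ecolor (φ a) (φ b) = EColor.white ∨ K.ecolor (φ a) (φ b) = EColor.gray)))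

/-- Motzkin–Straus bound for triangle-free 0/1 weight functions. -/
theorem motzkinAux {V : Type} [Fintype V] [DecidableEq V] [Nonempty V]
    (g : V → V → ℝ)
    (h01 : ∀ u v, g u v = 0 ∨ g u v = 1)
    (htri : ∀ u v w, g u v = 1 → g u w = 1 → g v w = 1 → False)
    (x : V → ℝ) (hx : ∀ v, 0 ≤ x v) (hs : ∑ v, x v = 1) :
    ∑ u, ∑ v, x u * x v * g u v ≤ 1 / 2 := by
  set d : V → ℝ := fun v => ∑ w, x w * g v w with hd
  have hg0 : ∀ u v, 0 ≤ g u v := by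
    intro u v; rcases h01 u v with h | h <;> simp [h]
  have hg1 : ∀ u v, g u v ≤ 1 := by
    intro u v; rcases h01 u v with h | h <;> simp [h]
  have hd0 : ∀ v, 0 ≤ d v :=
    fun v => Finset.sum_nonneg fun w _ => mul_nonneg (hx w) (hg0 v w)
  obtain ⟨u, -, hu⟩ := Finset.exists_max_image Finset.univ d Finset.univ_nonempty
  have hdu : d u = ∑ v ∈ Finset.univ.filter (fun v => g u v = 1), x v := by
    rw [Finset.sum_filter]
    apply Finset.sum_congr rfl
    intro w _
    rcases h01 u w with h | h <;> simp [h]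
  have hsplit := Finset.sum_filter_add_sum_filter_not Finset.univ (fun v => g u v = 1) x
  have hAc : ∑ v ∈ Finset.univ.filter (fun v => ¬ g u v = 1), x v = 1 - d u := by
    rw [hs] at hsplit
    rw [hdu]; linarith [hsplit]
  have hdu1 : d u ≤ 1 := by
    have h0 : 0 ≤ ∑ v ∈ Finset.univ.filter (fun v => ¬ g u v = 1), x v :=
      Finset.sum_nonneg fun v _ => hx v
    linarith [hAc]
  have hdnbr : ∀ v, g u v = 1 → d v ≤ 1 - d u := by
    intro v hv
    have hb : ∀ w, x w * g v w ≤ x w * (1 - g u w) := by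
      intro w
      rcases h01 u w with h | h
      · have h1 := hg1 v w
        have h2 := hx w
        nlinarith [hg0 v w]
      · have h' : g v w = 0 := by
          rcases h01 v w with h' | h'
          · exact h'
          · exact (htri u v w hv h h').elim
        simp [h, h']
    calc d v = ∑ w, x w * g v w := rfl
      _ ≤ ∑ w, x w * (1 - g u w) := Finset.sum_le_sum fun w _ => hb w
      _ = (∑ w, x w) - ∑ w, x w * g u w := by
          rw [← Finset.sum_sub_distrib]
          apply Finset.sum_congr rfl
          intros; ring
      _ = 1 - d u := by rw [hs]
  have hGd : ∑ a, ∑ b, x a * x b * g a b = ∑ a, x a * d a := by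
    apply Finset.sum_congr rfl
    intro a _
    rw [hd, Finset.mul_sum]
    apply Finset.sum_congr rfl
    intro b _; ring
  rw [hGd]
  have hsplit2 := Finset.sum_filter_add_sum_filter_not Finset.univ (fun v => g u v = 1)
    (fun v => x v * d v)
  have h1 : ∑ v ∈ Finset.univ.filter (fun v => g u v = 1), x v * d v ≤ d u * (1 - d u) := by
    calc ∑ v ∈ Finset.univ.filter (fun v => g u v = 1), x v * d v
        ≤ ∑ v ∈ Finset.univ.filter (fun v => g u v = 1), x v * (1 - d u) :=
          Finset.sum_le_sum fun v hv =>
            mul_le_mul_of_nonneg_left (hdnbr v (by simpa using hv)) (hx v)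
      _ = (∑ v ∈ Finset.univ.filter (fun v => g u v = 1), x v) * (1 - d u) := by
          rw [← Finset.sum_mul]
      _ = d u * (1 - d u) := by rw [← hdu]
  have h2 : ∑ v ∈ Finset.univ.filter (fun v => ¬ g u v = 1), x v * d v ≤ (1 - d u) * d u := by
    calc ∑ v ∈ Finset.univ.filter (fun v => ¬ g u v = 1), x v * d v
        ≤ ∑ v ∈ Finset.univ.filter (fun v => ¬ g u v = 1), x v * d u :=
          Finset.sum_le_sum fun v _ =>
            mul_le_mul_of_nonneg_left (hu v (Finset.mem_univ v)) (hx v)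
      _ = (∑ v ∈ Finset.univ.filter (fun v => ¬ g u v = 1), x v) * d u := by
          rw [← Finset.sum_mul]
      _ = (1 - d u) * d u := by rw [hAc]
  nlinarith [sq_nonneg (2 * d u - 1), hsplit2]

theorem quadform_ge_half_p {V : Type} [Fintype V] [DecidableEq V] [Nonempty V]
    (p : ℝ) (hp : p ∈ Set.Ioc (0 : ℝ) (1 / 2))
    (K : CRG V)
    (hblack : ∀ v : V, K.vWhite v = false)
    (htri : ¬∃ u v w : V, u ≠ v ∧ u ≠ w ∧ v ≠ w ∧
      K.ecolor u v = EColor.gray ∧ K.ecolor u w = EColor.gray ∧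
      K.ecolor v w = EColor.gray)
    (x : V → ℝ) (hx : ∀ v, 0 ≤ x v) (hs : ∑ v, x v = 1) :
    p / 2 ≤ ∑ u, ∑ v, x u * K.M p u v * x v := by
  classical
  set gi : V → V → ℝ := fun a b => if a ≠ b ∧ K.ecolor a b = EColor.gray then 1 else 0 with hgi
  set wi : V → V → ℝ := fun a b => if a ≠ b ∧ K.ecolor a b = EColor.white then 1 else 0 with hwi
  have key : ∀ u v, K.M p u v = (1 - p) - (1 - p) * gi u v - (1 - 2 * p) * wi u v := by
    intro u v
    by_cases h : u = v
    · subst h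
      simp [CRG.M, hblack u, hgi, hwi]
    · cases hc : K.ecolor u v with
      | white => simp [CRG.M, h, hc, hgi, hwi]; ring
      | gray => simp [CRG.M, h, hc, hgi, hwi]
      | black => simp [CRG.M, h, hc, hgi, hwi]
  have hgi01 : ∀ a b, gi a b = 0 ∨ gi a b = 1 := by
    intro a b; rw [hgi]; simp only []; split <;> simp
  have hwi01 : ∀ a b, wi a b = 0 ∨ wi a b = 1 := by
    intro a b; rw [hwi]; simp only []; split <;> simp
  have hgi0 : ∀ a b, 0 ≤ gi a b := by
    intro a b; rcases hgi01 a b with h | h <;> simp [h]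
  have hwi0 : ∀ a b, 0 ≤ wi a b := by
    intro a b; rcases hwi01 a b with h | h <;> simp [h]
  have hgiwi : ∀ a b, gi a b + wi a b ≤ 1 := by
    intro a b
    rw [hgi, hwi]
    by_cases h1 : a ≠ b ∧ K.ecolor a b = EColor.gray
    · have h2 : ¬ (a ≠ b ∧ K.ecolor a b = EColor.white) := by
        rintro ⟨-, h2⟩; rw [h1.2] at h2; exact EColor.noConfusion h2
      simp [h1, h2]
    · simp only [if_neg h1]
      split <;> norm_num
  have htri' : ∀ a b c, gi a b = 1 → gi a c = 1 → gi b c = 1 → False := by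
    intro a b c hab hac hbc
    have gab : a ≠ b ∧ K.ecolor a b = EColor.gray := by
      by_contra h; rw [hgi] at hab; simp [h] at hab
    have gac : a ≠ c ∧ K.ecolor a c = EColor.gray := by
      by_contra h; rw [hgi] at hac; simp [h] at hac
    have gbc : b ≠ c ∧ K.ecolor b c = EColor.gray := by
      by_contra h; rw [hgi] at hbc; simp [h] at hbc
    exact htri ⟨a, b, c, gab.1, gac.1, gbc.1, gab.2, gac.2, gbc.2⟩
  set G : ℝ := ∑ a, ∑ b, x a * x b * gi a b with hG
  set W : ℝ := ∑ a, ∑ b, x a * x b * wi a b with hW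
  have hQ : ∑ u, ∑ v, x u * K.M p u v * x v
      = (1 - p) * ((∑ v, x v) * (∑ v, x v)) - (1 - p) * G - (1 - 2 * p) * W := by
    rw [hG, hW, Finset.sum_mul_sum, Finset.mul_sum, Finset.mul_sum, Finset.mul_sum,
      ← Finset.sum_sub_distrib, ← Finset.sum_sub_distrib]
    apply Finset.sum_congr rfl
    intro a _
    rw [Finset.mul_sum, Finset.mul_sum, Finset.mul_sum,
      ← Finset.sum_sub_distrib, ← Finset.sum_sub_distrib]
    apply Finset.sum_congr rfl
    intro b _
    rw [key a b]; ring
  have hG2 : G ≤ 1 / 2 := motzkinAux gi hgi01 htri' x hx hs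
  have hG0 : 0 ≤ G := Finset.sum_nonneg fun a _ => Finset.sum_nonneg fun b _ =>
    mul_nonneg (mul_nonneg (hx a) (hx b)) (hgi0 a b)
  have hW0 : 0 ≤ W := Finset.sum_nonneg fun a _ => Finset.sum_nonneg fun b _ =>
    mul_nonneg (mul_nonneg (hx a) (hx b)) (hwi0 a b)
  have hGW : G + W ≤ 1 := by
    have : G + W = ∑ a, ∑ b, (x a * x b * gi a b + x a * x b * wi a b) := by
      rw [hG, hW, ← Finset.sum_add_distrib]
      apply Finset.sum_congr rfl
      intro a _
      rw [← Finset.sum_add_distrib]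
    rw [this]
    calc ∑ a, ∑ b, (x a * x b * gi a b + x a * x b * wi a b)
        ≤ ∑ a, ∑ b, x a * x b := by
          apply Finset.sum_le_sum; intro a _
          apply Finset.sum_le_sum; intro b _
          have h1 := hgiwi a b
          have h2 := mul_nonneg (hx a) (hx b)
          nlinarith
      _ = (∑ v, x v) * (∑ v, x v) := by rw [Finset.sum_mul_sum]
      _ = 1 := by rw [hs]; ring
  rw [hQ, hs]
  obtain ⟨hp0, hp2⟩ := hp
  nlinarith [mul_nonneg (by linarith : (0:ℝ) ≤ 1 - 2 * p) (by linarith : (0:ℝ) ≤ 1 - (G + W)),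
    mul_nonneg (le_of_lt hp0) (by linarith : (0:ℝ) ≤ 1 / 2 - G)]

theorem g_ge_half_p_of_no_gray_triangle {V : Type} [Fintype V] [DecidableEq V] [Nonempty V]
    (p : ℝ) (hp : p ∈ Set.Ioc (0 : ℝ) (1 / 2))
    (K : CRG V) (hcore : K.IsPCore p)
    (hblack : ∀ v : V, K.vWhite v = false)
    (htri : ¬∃ u v w : V, u ≠ v ∧ u ≠ w ∧ v ≠ w ∧
      K.ecolor u v = EColor.gray ∧ K.ecolor u w = EColor.gray ∧
      K.ecolor v w = EColor.gray) :
    p / 2 ≤ K.g p := by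
  apply le_csInf
  · refine ⟨∑ u, ∑ v, (fun _ : V => (Fintype.card V : ℝ)⁻¹) u * K.M p u v *
      (fun _ : V => (Fintype.card V : ℝ)⁻¹) v, fun _ => (Fintype.card V : ℝ)⁻¹,
      fun v => by positivity, ?_, rfl⟩
    rw [Finset.sum_const, Finset.card_univ, nsmul_eq_mul]
    rw [mul_inv_cancel₀]
    exact_mod_cast Fintype.card_ne_zero
  · rintro r ⟨x, hx, hs, rfl⟩
    exact quadform_ge_half_p p hp K hblack htri x hx hs
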